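/- Let & be a continuous t-norm on [0,1] with residuum →. Then the map d: [0,1] → ([0,1] → [0,1]) sending t to the function x ↦ (t → x) if t = 1 and x ↦ sup over b > t of (b → x) if t < 1, preserves the [0,1]-order α_R, in the sense that for all s, t with t < s < 1: s → t ≤ inf over x ∈ [0,1] of ((sup over a > t of (a → x)) → (sup over b > s of (b → x))). -/

import Mathlib

open unitInterval

instance : Fact ((0:ℝ) ≤ 1) := ⟨zero_le_one⟩

/-- Key inequality showing that `d : t ↦ ⋁_{b > t} (b → -)` preserves the
`[0,1]`-order `α_R`: for a continuous t-norm `&` on `[0,1]` with residuum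
`→`, and all `t < s < 1`,
`s → t ≤ ⨅ x, ((⨆ a > t, a → x) → (⨆ b > s, b → x))`. -/
theorem stmt_14 (mul : I → I → I) (imp : I → I → I)
    (hcont : Continuous fun p : I × I => mul p.1 p.2)
    (hcomm : ∀ a b, mul a b = mul b a)
    (hassoc : ∀ a b c, mul (mul a b) c = mul a (mul b c))
    (hmono : ∀ a, Monotone (mul a))
    (hunit : ∀ a, mul 1 a = a)
    (hadj : ∀ p q r, mul p q ≤ r ↔ q ≤ imp p r) :
    ∀ s t : I, t < s → s < 1 →
      imp s t ≤ ⨅ x : I,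
        imp (⨆ a : {a : I // t < a}, imp a x) (⨆ b : {b : I // s < b}, imp b x) := by
  intro s t hts hs1
  refine le_iInf fun x => ?_
  rw [← hadj, hcomm, hadj]
  refine iSup_le fun a => ?_
  obtain ⟨a, ha⟩ := a
  rw [← hadj]
  -- goal: mul (imp s t) (imp a x) ≤ ⨆ b, imp b x
  have hrs : mul (imp s t) s ≤ t := by
    rw [hcomm]; exact (hadj s (imp s t) t).mpr le_rfl
  have hcont2 : Continuous fun b : I => mul (imp s t) b :=
    hcont.comp (continuous_const.prodMk continuous_id)
  have hopen : IsOpen {b : I | mul (imp s t) b < a} :=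
    isOpen_lt hcont2 continuous_const
  have hs_mem : s ∈ {b : I | mul (imp s t) b < a} := lt_of_le_of_lt hrs ha
  have hmem : {b : I | mul (imp s t) b < a} ∈ nhdsWithin s (Set.Ioi s) :=
    mem_nhdsWithin_of_mem_nhds (hopen.mem_nhds hs_mem)
  have hne : (nhdsWithin s (Set.Ioi s)).NeBot := nhdsGT_neBot_of_exists_gt ⟨1, hs1⟩
  obtain ⟨b, hb_lt, hb_gt⟩ :=
    Filter.nonempty_of_mem (Filter.inter_mem hmem self_mem_nhdsWithin)
  refine le_trans ?_ (le_iSup (fun b : {b : I // s < b} => imp b x) ⟨b, hb_gt⟩)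
  rw [← hadj, ← hassoc]
  have h1 : mul (mul b (imp s t)) (imp a x) ≤ mul a (imp a x) := by
    rw [hcomm _ (imp a x), hcomm a (imp a x)]
    refine hmono (imp a x) ?_
    rw [hcomm]
    exact le_of_lt hb_lt
  exact le_trans h1 ((hadj a (imp a x) x).mpr le_rfl)
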